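/- (Pure Steering in quantum theory.) Let Ψ be a unit vector indexed by Fin m × Fin n, let ρ = ptr₂(ΨΨᴴ) be its marginal on the first system, let ι be a finite index type, and let (ρ_x)_{x∈ι} be positive semidefinite m×m matrices with ∑_x ρ_x = ρ (an ensemble decomposition of ρ). Then there exists a family (B_x)_{x∈ι} of positive semidefinite n×n matrices with ∑_x B_x = 1ₙ (a measurement on the second system) such that ptr₂((1ₘ ⊗ₖ B_x) · (ΨΨᴴ)) = ρ_x for every x ∈ ι. That is, every ensemble decomposition of the marginal of a pure bipartite state can be generated remotely by a measurement on the other system. -/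

import Mathlib

open Matrix
open scoped Kronecker ComplexOrder

noncomputable section

/-- Partial trace over the second tensor factor. -/
def ptr2 {m n : ℕ} (X : Matrix (Fin m × Fin n) (Fin m × Fin n) ℂ) :
    Matrix (Fin m) (Fin m) ℂ :=
  Matrix.of fun i j => ∑ k : Fin n, X (i, k) (j, k)

/-- outer product `v vᴴ` of a complex vector with itself. -/
def outerC {α : Type*} (v : α → ℂ) : Matrix α α ℂ :=
  Matrix.of fun a b => v a * star (v b)

/-- auxiliary: pseudoinverse of a PSD matrix -/
lemma aux_exists_pinv {k : ℕ} {ρ : Matrix (Fin k) (Fin k) ℂ} (hρ : ρ.PosSemidef) :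
    ∃ g : Matrix (Fin k) (Fin k) ℂ,
      g.PosSemidef ∧ ρ * g = g * ρ ∧ ρ * g * ρ = ρ ∧ g * ρ * g = g := by
  classical
  have hH := hρ.isHermitian
  set U : Matrix (Fin k) (Fin k) ℂ := (hH.eigenvectorUnitary : Matrix (Fin k) (Fin k) ℂ) with hUdef
  have hU1 : star U * U = 1 := mem_unitaryGroup_iff'.mp (hH.eigenvectorUnitary).2
  set d : Fin k → ℂ := RCLike.ofReal ∘ hH.eigenvalues with hd
  set d' : Fin k → ℂ := fun i => if hH.eigenvalues i = 0 then 0 else ((hH.eigenvalues i : ℝ) : ℂ)⁻¹ with hd'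
  have hspec : ρ = U * diagonal d * star U := hH.spectral_theorem
  have key : ∀ f f' : Fin k → ℂ, (U * diagonal f * star U) * (U * diagonal f' * star U)
      = U * diagonal (f * f') * star U := by
    intro f f'
    calc (U * diagonal f * star U) * (U * diagonal f' * star U)
        = U * diagonal f * (star U * U) * diagonal f' * star U := by
          simp only [mul_assoc]
      _ = U * (diagonal f * diagonal f') * star U := by
          rw [hU1]; simp only [mul_one, mul_assoc]
      _ = U * diagonal (f * f') * star U := by rw [diagonal_mul_diagonal]; rfl
  refine ⟨U * diagonal d' * star U, ?_, ?_, ?_, ?_⟩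
  · have hd'0 : ∀ i, 0 ≤ d' i := by
      intro i
      by_cases h : hH.eigenvalues i = 0
      · simp [hd', h]
      · simp only [hd', h, if_false]
        rw [← Complex.ofReal_inv]
        rw [Complex.zero_le_real]
        exact inv_nonneg.mpr (hρ.eigenvalues_nonneg i)
    have := (posSemidef_diagonal_iff.mpr hd'0).mul_mul_conjTranspose_same U
    rwa [← star_eq_conjTranspose] at this
  · rw [hspec, key, key, mul_comm d d']
  · rw [hspec, key, key]
    refine congrArg (· * star U) (congrArg (U * ·) (congrArg diagonal (funext fun i => ?_)))
    by_cases h : hH.eigenvalues i = 0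
    · simp [hd, hd', h, Pi.mul_apply, Function.comp]
    · have hne : ((hH.eigenvalues i : ℝ) : ℂ) ≠ 0 := by exact_mod_cast Complex.ofReal_ne_zero.mpr h
      simp only [Pi.mul_apply, hd, hd', Function.comp_apply, h, if_false]
      field_simp
      rw [sq]; rfl
  · rw [hspec, key, key]
    refine congrArg (· * star U) (congrArg (U * ·) (congrArg diagonal (funext fun i => ?_)))
    by_cases h : hH.eigenvalues i = 0
    · simp [hd, hd', h, Pi.mul_apply, Function.comp]
    · have hne : ((hH.eigenvalues i : ℝ) : ℂ) ≠ 0 := by exact_mod_cast Complex.ofReal_ne_zero.mpr h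
      simp only [Pi.mul_apply, hd, hd', Function.comp_apply, h, if_false]
      field_simp
      rfl

/-- If A is PSD and Cᴴ A C = 0 then A C = 0. -/
lemma aux_sandwich_zero {k : ℕ} {A C : Matrix (Fin k) (Fin k) ℂ} (hA : A.PosSemidef)
    (h : Cᴴ * A * C = 0) : A * C = 0 := by
  obtain ⟨B, hB⟩ : ∃ B : Matrix (Fin k) (Fin k) ℂ, A = Bᴴ * B := by
    open scoped MatrixOrder Matrix.Norms.L2Operator in
    exact CStarAlgebra.nonneg_iff_eq_star_mul_self.mp hA.nonneg
  subst hB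
  have h2 : (B * C)ᴴ * (B * C) = 0 := by
    rw [conjTranspose_mul]
    calc Cᴴ * Bᴴ * (B * C) = Cᴴ * (Bᴴ * B) * C := by simp only [mul_assoc]
      _ = 0 := h
  have h3 : B * C = 0 := conjTranspose_mul_self_eq_zero.mp h2
  calc Bᴴ * B * C = Bᴴ * (B * C) := by rw [mul_assoc]
    _ = 0 := by rw [h3, mul_zero]

/-- Two PSD matrices summing to zero are zero. -/
lemma aux_psd_add_zero {k : ℕ} {A B : Matrix (Fin k) (Fin k) ℂ} (hA : A.PosSemidef)
    (hB : B.PosSemidef) (h : A + B = 0) : A = 0 := by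
  have hv : ∀ x : Fin k → ℂ, A *ᵥ x = 0 := by
    intro x
    rw [← hA.dotProduct_mulVec_zero_iff]
    have h1 := hA.dotProduct_mulVec_nonneg x
    have h2 := hB.dotProduct_mulVec_nonneg x
    have h3 : star x ⬝ᵥ A *ᵥ x + star x ⬝ᵥ B *ᵥ x = 0 := by
      rw [← dotProduct_add, ← add_mulVec, h, zero_mulVec, dotProduct_zero]
    have h4 : star x ⬝ᵥ A *ᵥ x ≤ 0 := by
      rw [← h3]; exact le_add_of_nonneg_right h2
    exact le_antisymm h4 h1
  ext i j
  have := congrFun (hv (Pi.single j 1)) i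
  simpa [mulVec_single] using this


/-- the vector Ψ reshaped as an m×n matrix -/
def vmat {m n : ℕ} (Ψ : Fin m × Fin n → ℂ) : Matrix (Fin m) (Fin n) ℂ :=
  Matrix.of fun i k => Ψ (i, k)

lemma aux_ptr2_outer {m n : ℕ} (Ψ : Fin m × Fin n → ℂ) :
    ptr2 (outerC Ψ) = vmat Ψ * (vmat Ψ)ᴴ := by
  ext i j
  show (∑ k : Fin n, Ψ (i,k) * star (Ψ (j,k))) = _
  simp [vmat, mul_apply, conjTranspose_apply]

lemma aux_ptr2_kron {m n : ℕ} (Ψ : Fin m × Fin n → ℂ) (B : Matrix (Fin n) (Fin n) ℂ) :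
    ptr2 (((1 : Matrix (Fin m) (Fin m) ℂ) ⊗ₖ B) * outerC Ψ)
      = vmat Ψ * Bᵀ * (vmat Ψ)ᴴ := by
  ext i j
  simp only [ptr2, outerC, vmat, Matrix.of_apply, mul_apply, kroneckerMap_apply, conjTranspose_apply,
    Fintype.sum_prod_type, one_apply, ite_mul, zero_mul, transpose_apply]
  refine Finset.sum_congr rfl fun k _ => ?_
  rw [Finset.sum_mul, Finset.sum_eq_single_of_mem i (Finset.mem_univ i)
    (by intro b _ hb; simp [Ne.symm hb])]
  refine Finset.sum_congr rfl fun q _ => ?_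
  rw [if_pos rfl]
  ring

lemma aux_smul_psd {k : ℕ} (r : ℝ) (hr : 0 ≤ r) {A : Matrix (Fin k) (Fin k) ℂ}
    (hA : A.PosSemidef) : ((r : ℂ) • A).PosSemidef := by
  refine PosSemidef.of_dotProduct_mulVec_nonneg ?_ ?_
  · rw [IsHermitian, conjTranspose_smul, hA.isHermitian.eq]
    congr 1
    simp [Complex.star_def, Complex.conj_ofReal]
  · intro x
    rw [smul_mulVec, dotProduct_smul, smul_eq_mul]
    exact mul_nonneg (by rw [Complex.zero_le_real]; exact hr) (hA.dotProduct_mulVec_nonneg x)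

theorem stmt17 {m n : ℕ} {ι : Type*} [Fintype ι]
    (Ψ : Fin m × Fin n → ℂ) (hΨ : ∑ a, ‖Ψ a‖ ^ 2 = 1)
    (ρx : ι → Matrix (Fin m) (Fin m) ℂ)
    (hpsd : ∀ x, (ρx x).PosSemidef)
    (hsum : ∑ x, ρx x = ptr2 (outerC Ψ)) :
    ∃ B : ι → Matrix (Fin n) (Fin n) ℂ,
      (∀ x, (B x).PosSemidef) ∧ (∑ x, B x = 1) ∧
      ∀ x, ptr2 (((1 : Matrix (Fin m) (Fin m) ℂ) ⊗ₖ B x) * outerC Ψ) = ρx x := by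
  classical
  obtain ⟨M, hMdef⟩ : ∃ M, M = vmat Ψ := ⟨_, rfl⟩
  obtain ⟨ρ, hρdef⟩ : ∃ ρ, ρ = M * Mᴴ := ⟨_, rfl⟩
  have hρeq : ptr2 (outerC Ψ) = ρ := by rw [hρdef, hMdef]; exact aux_ptr2_outer Ψ
  have hρ : ρ.PosSemidef := hρdef ▸ posSemidef_self_mul_conjTranspose M
  obtain ⟨g, hg, hcomm, hρgρ, hgρg⟩ := aux_exists_pinv hρ
  have hgH : gᴴ = g := hg.isHermitian
  have hρH : ρᴴ = ρ := hρ.isHermitian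
  have hsum' : ∑ x, ρx x = ρ := hsum.trans hρeq
  -- trace of ρ is 1, so ι is nonempty
  have htr : ∑ i, ρ i i = 1 := by
    have h1 : ∀ i : Fin m, ρ i i = ((∑ k : Fin n, ‖Ψ (i, k)‖ ^ 2 : ℝ) : ℂ) := by
      intro i
      rw [hρdef, hMdef]
      simp only [mul_apply, conjTranspose_apply, vmat, Matrix.of_apply]
      push_cast
      refine Finset.sum_congr rfl fun k _ => ?_
      rw [Complex.star_def, Complex.mul_conj]
      norm_cast
      rw [Complex.sq_norm]
    rw [Finset.sum_congr rfl fun i _ => h1 i, ← Complex.ofReal_sum,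
      show (1 : ℂ) = ((1 : ℝ) : ℂ) by norm_num]
    congr 1
    rw [← hΨ]
    exact (Fintype.sum_prod_type fun a => ‖Ψ a‖ ^ 2).symm
  have hι : Nonempty ι := by
    by_contra h
    rw [not_nonempty_iff] at h
    have h0 : ρ = 0 := by rw [← hsum', Finset.univ_eq_empty, Finset.sum_empty]
    rw [h0] at htr
    simp at htr
  have hcard : (Fintype.card ι : ℂ) ≠ 0 := by
    exact_mod_cast Fintype.card_ne_zero (α := ι)
  -- facts about the support "projection" ρ * g
  have hρρg : ρ * (ρ * g) = ρ := by rw [hcomm, ← Matrix.mul_assoc, hρgρ]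
  have hPH : (ρ * g)ᴴ = ρ * g := by rw [conjTranspose_mul, hgH, hρH, ← hcomm]
  -- (ρ g) M = M
  have hPM : ρ * g * M = M := by
    have e1 : (M - ρ * g * M)ᴴ = Mᴴ - Mᴴ * (ρ * g) := by
      rw [conjTranspose_sub, conjTranspose_mul, hPH]
    have p1 : M * (Mᴴ * (ρ * g)) = ρ := by rw [← Matrix.mul_assoc, ← hρdef, hρρg]
    have p2 : ρ * g * M * Mᴴ = ρ := by rw [Matrix.mul_assoc, ← hρdef, hρgρ]
    have p3 : ρ * g * M * (Mᴴ * (ρ * g)) = ρ := by rw [← Matrix.mul_assoc, p2, hρρg]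
    have key : (M - ρ * g * M) * (M - ρ * g * M)ᴴ = 0 := by
      rw [e1, Matrix.sub_mul, Matrix.mul_sub, Matrix.mul_sub, p1, p2, p3, ← hρdef]
      abel
    have := self_mul_conjTranspose_eq_zero.mp key
    rw [sub_eq_zero] at this
    exact this.symm
  -- each ρx x is supported on ρ g
  have hxP : ∀ x, ρx x * (ρ * g) = ρx x := by
    intro x
    have hσ : (ρ - ρx x).PosSemidef := by
      have he : ρ - ρx x = ∑ y ∈ Finset.univ.erase x, ρx y := by
        rw [Finset.sum_erase_eq_sub (Finset.mem_univ x), hsum']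
      rw [he]
      exact Finset.sum_induction _ _ (fun a b ha hb => ha.add hb) .zero fun y _ => hpsd y
    have hCH : (1 - ρ * g)ᴴ = 1 - ρ * g := by
      rw [conjTranspose_sub, conjTranspose_one, hPH]
    have hCρC : (1 - ρ * g)ᴴ * ρ * (1 - ρ * g) = 0 := by
      rw [hCH]
      have : (1 - ρ * g) * ρ * (1 - ρ * g) = (ρ - ρ * g * ρ) * (1 - ρ * g) := by
        noncomm_ring
      rw [this, hρgρ, sub_self, zero_mul]
    have hA : ((1 - ρ * g)ᴴ * ρx x * (1 - ρ * g)).PosSemidef :=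
      (hpsd x).conjTranspose_mul_mul_same _
    have hB : ((1 - ρ * g)ᴴ * (ρ - ρx x) * (1 - ρ * g)).PosSemidef :=
      hσ.conjTranspose_mul_mul_same _
    have hAB : (1 - ρ * g)ᴴ * ρx x * (1 - ρ * g) + (1 - ρ * g)ᴴ * (ρ - ρx x) * (1 - ρ * g)
        = 0 := by
      rw [← hCρC]
      noncomm_ring
    have hCx := aux_psd_add_zero hA hB hAB
    have := aux_sandwich_zero (hpsd x) hCx
    rw [mul_sub, mul_one, sub_eq_zero] at this
    exact this.symm
  have hPx : ∀ x, ρ * g * ρx x = ρx x := by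
    intro x
    have := congrArg conjTranspose (hxP x)
    rwa [conjTranspose_mul, hPH, (hpsd x).isHermitian.eq] at this
  -- the operator Q and its complement
  have hQH : (Mᴴ * g * M)ᴴ = Mᴴ * g * M := by
    rw [conjTranspose_mul, conjTranspose_mul, hgH, conjTranspose_conjTranspose, Matrix.mul_assoc]
  have hQQ : Mᴴ * g * M * (Mᴴ * g * M) = Mᴴ * g * M := by
    calc Mᴴ * g * M * (Mᴴ * g * M) = Mᴴ * (g * (M * Mᴴ) * g) * M := by
          simp only [Matrix.mul_assoc]
      _ = Mᴴ * (g * ρ * g) * M := by rw [← hρdef]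
      _ = Mᴴ * g * M := by rw [hgρg, Matrix.mul_assoc]
  have hMQM : M * (Mᴴ * g * M) * Mᴴ = ρ := by
    calc M * (Mᴴ * g * M) * Mᴴ = (M * Mᴴ) * g * (M * Mᴴ) := by simp only [Matrix.mul_assoc]
      _ = ρ * g * ρ := by rw [← hρdef]
      _ = ρ := hρgρ
  have h1Q : ((1 : Matrix (Fin n) (Fin n) ℂ) - Mᴴ * g * M).PosSemidef := by
    have key : (1 - Mᴴ * g * M)ᴴ * (1 - Mᴴ * g * M) = 1 - Mᴴ * g * M := by
      rw [conjTranspose_sub, conjTranspose_one, hQH, sub_mul, mul_sub, mul_sub, mul_one,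
        mul_one, one_mul, hQQ]
      abel
    rw [← key]
    exact posSemidef_conjTranspose_mul_self _
  -- the measurement, before transposing
  obtain ⟨W, hWdef⟩ : ∃ W : ι → Matrix (Fin n) (Fin n) ℂ, W = fun x =>
      Mᴴ * (g * ρx x * g) * M
        + Complex.ofReal ((Fintype.card ι : ℝ)⁻¹) • (1 - Mᴴ * g * M) := ⟨_, rfl⟩
  have hWpsd : ∀ x, (W x).PosSemidef := by
    intro x
    rw [hWdef]
    refine PosSemidef.add ?_ (aux_smul_psd _ (by positivity) h1Q)
    have h1 : (g * ρx x * g).PosSemidef := by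
      have := (hpsd x).mul_mul_conjTranspose_same g
      rwa [hgH] at this
    exact h1.conjTranspose_mul_mul_same M
  have hWval : ∀ x, M * W x * Mᴴ = ρx x := by
    intro x
    have h0 : M * ((1 : Matrix (Fin n) (Fin n) ℂ) - Mᴴ * g * M) * Mᴴ = 0 := by
      rw [Matrix.mul_sub, Matrix.sub_mul, Matrix.mul_one, hMQM, ← hρdef, sub_self]
    have h2 : M * (Mᴴ * (g * ρx x * g) * M) * Mᴴ = ρx x := by
      calc M * (Mᴴ * (g * ρx x * g) * M) * Mᴴ
          = (M * Mᴴ) * g * ρx x * (g * (M * Mᴴ)) := by simp only [Matrix.mul_assoc]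
        _ = ρ * g * ρx x * (g * ρ) := by rw [← hρdef]
        _ = ρx x * (ρ * g) := by rw [hPx, hcomm]
        _ = ρx x := hxP x
    rw [hWdef]
    simp only
    rw [Matrix.mul_add, Matrix.add_mul, h2, Matrix.mul_smul, Matrix.smul_mul, h0, smul_zero, add_zero]
  have hWsum : ∑ x, W x = 1 := by
    rw [hWdef]
    rw [Finset.sum_add_distrib, Finset.sum_const, Finset.card_univ]
    have hl : ∑ x, Mᴴ * (g * ρx x * g) * M = Mᴴ * g * M := by
      have : ∑ x, Mᴴ * (g * ρx x * g) * M = Mᴴ * (g * (∑ x, ρx x) * g) * M := by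
        simp only [Matrix.mul_sum, Matrix.sum_mul]
      rw [this, hsum', hgρg]
    rw [hl, ← Nat.cast_smul_eq_nsmul ℂ, smul_smul]
    rw [show (Fintype.card ι : ℂ) * Complex.ofReal ((Fintype.card ι : ℝ)⁻¹) = 1 by
      rw [Complex.ofReal_inv]; push_cast; exact mul_inv_cancel₀ hcard]
    rw [one_smul]
    abel
  refine ⟨fun x => (W x)ᵀ, fun x => (hWpsd x).transpose, ?_, ?_⟩
  · rw [← transpose_sum, hWsum, transpose_one]
  · intro x
    rw [aux_ptr2_kron Ψ ((W x)ᵀ), transpose_transpose, ← hMdef, hWval x]
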